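/- Let B > 0, p ∈ ℝ, and let v : ℝ → ℝ be continuous and bounded. Let φ : ℝ → 𝓢(ℝ), λ ↦ φ_λ, be a differentiable map into the Schwartz space of real-valued functions, and let ε : ℝ → ℝ be such that for all λ, x ∈ ℝ: −φ_λ″(x) + (B²x² + λ·v(x − p/B)) φ_λ(x) = ε(λ) φ_λ(x), and ∫_ℝ φ_λ(x)² dx = 1 for all λ. Then ε is differentiable and for every λ ∈ ℝ its derivative is ε′(λ) = ∫_ℝ v(x − p/B) φ_λ(x)² dx. -/

import Mathlib

open MeasureTheory SchwartzMap Filter Topology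

lemma intSS (f g : SchwartzMap ℝ ℝ) : Integrable (fun x => f x * g x) :=
  g.integrable.bdd_mul f.continuous.aestronglyMeasurable
    (c := SchwartzMap.seminorm ℝ 0 0 f) (Filter.Eventually.of_forall fun x => norm_le_seminorm ℝ f x)

lemma intWS (w : ℝ → ℝ) (hw : Integrable w) (f : SchwartzMap ℝ ℝ) :
    Integrable (fun x => w x * f x) := by
  have := hw.bdd_mul f.continuous.aestronglyMeasurable
    (c := SchwartzMap.seminorm ℝ 0 0 f) (Filter.Eventually.of_forall fun x => norm_le_seminorm ℝ f x)
  simpa [mul_comm] using this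

lemma tendsto_integral_weight_mul {α : Type*} {F : Filter α} (w : ℝ → ℝ)
    (hw : Integrable w)
    {g : α → SchwartzMap ℝ ℝ} {g0 : SchwartzMap ℝ ℝ} (hg : Tendsto g F (𝓝 g0)) :
    Tendsto (fun a => ∫ x, w x * g a x) F (𝓝 (∫ x, w x * g0 x)) := by
  have hsem : Tendsto (fun a => SchwartzMap.seminorm ℝ 0 0 (g a - g0)) F (𝓝 0) := by
    rw [NormedAddCommGroup.tendsto_nhds_zero]
    intro ε hε
    have := ((schwartz_withSeminorms ℝ ℝ ℝ).tendsto_nhds g g0).mp hg (0, 0) ε hε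
    filter_upwards [this] with a ha
    simpa [Real.norm_of_nonneg (apply_nonneg _ _)] using ha
  have key : ∀ a, ‖(∫ x, w x * g a x) - ∫ x, w x * g0 x‖ ≤
      (∫ x, ‖w x‖) * SchwartzMap.seminorm ℝ 0 0 (g a - g0) := by
    intro a
    rw [← integral_sub (intWS w hw _) (intWS w hw _)]
    have h1 : ∀ x, w x * g a x - w x * g0 x = w x * (g a - g0) x := by
      intro x; simp [SchwartzMap.sub_apply]; ring
    simp_rw [h1]
    calc ‖∫ x, w x * (g a - g0) x‖ ≤ ∫ x, ‖w x * (g a - g0) x‖ :=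
          norm_integral_le_integral_norm _
      _ ≤ ∫ x, ‖w x‖ * SchwartzMap.seminorm ℝ 0 0 (g a - g0) := by
          apply integral_mono (intWS w hw _).norm (hw.norm.mul_const _)
          intro x
          simp only [norm_mul]
          exact mul_le_mul_of_nonneg_left (norm_le_seminorm ℝ _ x) (norm_nonneg _)
      _ = (∫ x, ‖w x‖) * SchwartzMap.seminorm ℝ 0 0 (g a - g0) := by
          rw [integral_mul_const]
  rw [← tendsto_sub_nhds_zero_iff]
  apply squeeze_zero_norm key
  simpa using hsem.const_mul (∫ x, ‖w x‖)

lemma schwartz_ibp (f g : SchwartzMap ℝ ℝ) :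
    ∫ x, deriv (deriv f) x * g x = ∫ x, f x * deriv (deriv g) x := by
  have hc : ∀ h : SchwartzMap ℝ ℝ, deriv ⇑h = ⇑(derivCLM ℝ ℝ h) :=
    fun h => funext fun x => (derivCLM_apply (𝕜 := ℝ) h x).symm
  have hdf : ∀ h : SchwartzMap ℝ ℝ, ∀ x, HasDerivAt h (derivCLM ℝ ℝ h x) x := by
    intro h x
    rw [derivCLM_apply]
    exact h.differentiableAt.hasDerivAt
  rw [hc f, hc (derivCLM ℝ ℝ f), hc g, hc (derivCLM ℝ ℝ g)]
  have A : ∫ x, g x * derivCLM ℝ ℝ (derivCLM ℝ ℝ f) x = - ∫ x, derivCLM ℝ ℝ g x * derivCLM ℝ ℝ f x :=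
    integral_mul_deriv_eq_deriv_mul_of_integrable (fun x _ => hdf g x) (fun x _ => hdf (derivCLM ℝ ℝ f) x)
      (intSS g _) (intSS _ _) (intSS g _)
  have B : ∫ x, f x * derivCLM ℝ ℝ (derivCLM ℝ ℝ g) x = - ∫ x, derivCLM ℝ ℝ f x * derivCLM ℝ ℝ g x :=
    integral_mul_deriv_eq_deriv_mul_of_integrable (fun x _ => hdf f x) (fun x _ => hdf (derivCLM ℝ ℝ g) x)
      (intSS f _) (intSS _ _) (intSS f _)
  calc ∫ x, derivCLM ℝ ℝ (derivCLM ℝ ℝ f) x * g x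
      = ∫ x, g x * derivCLM ℝ ℝ (derivCLM ℝ ℝ f) x := by simp_rw [mul_comm]
    _ = - ∫ x, derivCLM ℝ ℝ g x * derivCLM ℝ ℝ f x := A
    _ = - ∫ x, derivCLM ℝ ℝ f x * derivCLM ℝ ℝ g x := by simp_rw [mul_comm]
    _ = ∫ x, f x * derivCLM ℝ ℝ (derivCLM ℝ ℝ g) x := B.symm


/-- Differentiability of a curve in the Schwartz space `𝓢(ℝ, ℝ)`: the
difference quotients converge to `φ'` in the Schwartz topology. -/
def HasSchwartzDerivAt (φ : ℝ → SchwartzMap ℝ ℝ) (φ' : SchwartzMap ℝ ℝ)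
    (l : ℝ) : Prop :=
  Filter.Tendsto (fun h : ℝ => h⁻¹ • (φ (l + h) - φ l))
    (nhdsWithin (0 : ℝ) {(0 : ℝ)}ᶜ) (nhds φ')

/-- Feynman–Hellmann formula in the coupling constant: with
`B > 0`, `p ∈ ℝ`, `v` continuous and bounded, and a differentiable family
`λ ↦ φ_λ ∈ 𝓢(ℝ)` of normalized real eigenfunctions of
`−d²/dx² + B²x² + λ·v(x − p/B)` with eigenvalue `ε(λ)`, the eigenvalue curve is
differentiable with `ε'(λ) = ∫ v(x − p/B) φ_λ(x)² dx`. -/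
theorem feynman_hellmann_coupling
    (B p : ℝ) (hB : 0 < B)
    (v : ℝ → ℝ) (hv : Continuous v)
    (hvb : ∃ C : ℝ, ∀ x, |v x| ≤ C)
    (φ : ℝ → SchwartzMap ℝ ℝ)
    (hφdiff : ∀ l : ℝ, ∃ ψ : SchwartzMap ℝ ℝ, HasSchwartzDerivAt φ ψ l)
    (ε : ℝ → ℝ)
    (heigen : ∀ l x : ℝ,
      -(deriv (deriv (φ l)) x) + (B ^ 2 * x ^ 2 + l * v (x - p / B)) * φ l x
        = ε l * φ l x)
    (hnorm : ∀ l : ℝ, (∫ x : ℝ, (φ l x) ^ 2) = 1) :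
    ∀ l : ℝ,
      HasDerivAt ε (∫ x : ℝ, v (x - p / B) * (φ l x) ^ 2) l := by
  intro l
  obtain ⟨C, hC⟩ := hvb
  have hC0 : 0 ≤ C := le_trans (abs_nonneg _) (hC 0)
  have hvs_cont : Continuous (fun x : ℝ => v (x - p / B)) :=
    hv.comp (continuous_id.sub continuous_const)
  have hvs_bdd : ∀ x : ℝ, ‖v (x - p / B)‖ ≤ C := fun x => hC _
  have hint_vs : ∀ f : SchwartzMap ℝ ℝ, Integrable (fun x => v (x - p / B) * f x) :=
    fun f => f.integrable.bdd_mul hvs_cont.aestronglyMeasurable (c := C) (Filter.Eventually.of_forall hvs_bdd)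
  have hint_vss : ∀ f g : SchwartzMap ℝ ℝ,
      Integrable (fun x => (v (x - p / B) * f x) * g x) := fun f g =>
    g.integrable.bdd_mul (hvs_cont.mul f.continuous).aestronglyMeasurable
      (c := C * SchwartzMap.seminorm ℝ 0 0 f) (Filter.Eventually.of_forall fun x => by
        rw [norm_mul]
        exact mul_le_mul (hvs_bdd x) (norm_le_seminorm ℝ f x) (norm_nonneg _) hC0)
  have hc : ∀ h : SchwartzMap ℝ ℝ,
      deriv (deriv ⇑h) = ⇑(derivCLM ℝ ℝ (derivCLM ℝ ℝ h)) := by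
    intro h
    have h1 : ∀ g : SchwartzMap ℝ ℝ, deriv ⇑g = ⇑(derivCLM ℝ ℝ g) :=
      fun g => funext fun x => (derivCLM_apply (𝕜 := ℝ) g x).symm
    rw [h1 h, h1 (derivCLM ℝ ℝ h)]
  have hIdd : ∀ f g : SchwartzMap ℝ ℝ,
      Integrable (fun x => deriv (deriv ⇑f) x * g x) := by
    intro f g
    simp only [hc f]
    exact intSS _ g
  -- key identity
  have key : ∀ a b : ℝ, (ε a - ε b) * (∫ x, φ b x * φ a x)
      = (a - b) * ∫ x, (v (x - p / B) * φ b x) * φ a x := by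
    intro a b
    have hmain : (∫ x, ((ε a - ε b) * (φ b x * φ a x)
          - (a - b) * ((v (x - p / B) * φ b x) * φ a x)))
        = ∫ x, (-(deriv (deriv (φ a)) x * φ b x) + deriv (deriv (φ b)) x * φ a x) := by
      congr 1
      funext x
      have h1 := heigen a x
      have h2 := heigen b x
      linear_combination φ a x * h2 - φ b x * h1
    have hnegint : Integrable (fun x => -(deriv (deriv ⇑(φ a)) x * φ b x)) :=
      (hIdd (φ a) (φ b)).neg
    rw [integral_sub ((intSS (φ b) (φ a)).const_mul _) ((hint_vss (φ b) (φ a)).const_mul _),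
      integral_const_mul, integral_const_mul,
      integral_add hnegint (hIdd (φ b) (φ a)), integral_neg] at hmain
    have h0 : (∫ x, deriv (deriv (φ a)) x * φ b x)
        = ∫ x, deriv (deriv (φ b)) x * φ a x := by
      rw [schwartz_ibp (φ a) (φ b)]
      simp_rw [mul_comm]
    rw [h0] at hmain
    linarith
  obtain ⟨ψ, hψ⟩ := hφdiff l
  have hφt : Tendsto (fun h : ℝ => φ (l + h)) (𝓝[≠] (0 : ℝ)) (𝓝 (φ l)) := by
    have h0 : Tendsto (fun h : ℝ => h) (𝓝[≠] (0 : ℝ)) (𝓝 (0 : ℝ)) :=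
      tendsto_id.mono_left nhdsWithin_le_nhds
    have h1 := h0.smul hψ
    rw [zero_smul] at h1
    have h2 : (fun h : ℝ => h • (h⁻¹ • (φ (l + h) - φ l))) =ᶠ[𝓝[≠] (0 : ℝ)]
        (fun h => φ (l + h) - φ l) := by
      filter_upwards [self_mem_nhdsWithin] with h hh
      simp only [Set.mem_compl_iff, Set.mem_singleton_iff] at hh
      rw [smul_inv_smul₀ hh]
    have h3 := (h1.congr' h2).add_const (φ l)
    simpa using h3
  have hN : Tendsto (fun h : ℝ => ∫ x, φ l x * φ (l + h) x) (𝓝[≠] (0 : ℝ)) (𝓝 1) := by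
    have h1 := tendsto_integral_weight_mul (fun x => φ l x) (φ l).integrable hφt
    have h2 : (∫ x, φ l x * φ l x) = 1 := by
      simp_rw [← pow_two]; exact hnorm l
    rwa [h2] at h1
  have hI : Tendsto (fun h : ℝ => ∫ x, (v (x - p / B) * φ l x) * φ (l + h) x)
      (𝓝[≠] (0 : ℝ)) (𝓝 (∫ x, v (x - p / B) * φ l x ^ 2)) := by
    have h1 := tendsto_integral_weight_mul (fun x => v (x - p / B) * φ l x)
      (hint_vs (φ l)) hφt
    have h2 : (∫ x, (v (x - p / B) * φ l x) * φ l x) = ∫ x, v (x - p / B) * φ l x ^ 2 := by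
      congr 1; funext x; ring
    rwa [h2] at h1
  have hNne : ∀ᶠ h in 𝓝[≠] (0 : ℝ), (∫ x, φ l x * φ (l + h) x) ≠ 0 :=
    hN.eventually_ne one_ne_zero
  rw [hasDerivAt_iff_tendsto_slope_zero]
  have heq : (fun h : ℝ => (∫ x, (v (x - p / B) * φ l x) * φ (l + h) x)
        / (∫ x, φ l x * φ (l + h) x)) =ᶠ[𝓝[≠] (0 : ℝ)]
      (fun h : ℝ => h⁻¹ • (ε (l + h) - ε l)) := by
    filter_upwards [hNne, self_mem_nhdsWithin] with h hne hh
    simp only [Set.mem_compl_iff, Set.mem_singleton_iff] at hh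
    have hk := key (l + h) l
    rw [add_sub_cancel_left] at hk
    rw [smul_eq_mul, div_eq_iff hne]
    calc (∫ x, (v (x - p / B) * φ l x) * φ (l + h) x)
        = h⁻¹ * (h * ∫ x, (v (x - p / B) * φ l x) * φ (l + h) x) := by
          rw [← mul_assoc, inv_mul_cancel₀ hh, one_mul]
      _ = h⁻¹ * ((ε (l + h) - ε l) * ∫ x, φ l x * φ (l + h) x) := by rw [← hk]
      _ = h⁻¹ * (ε (l + h) - ε l) * (∫ x, φ l x * φ (l + h) x) := by ring
  have hfin := hI.div hN one_ne_zero
  rw [div_one] at hfin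
  exact hfin.congr' heq
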